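/- If f: {0,1}^n → {0,1} is non-constant then the unitary C_f defined by C_f|x,y⟩ = e^{iπ(1-2y)f(x)/4}|x,y⟩ cannot be written as a tensor product U ⊗ V of a unitary U on the first n qubits and a unitary V on the last qubit. -/
import Mathlib


open Complex Matrix Kronecker

noncomputable section

/-- The diagonal unitary `C_f` on `n+1` qubits. -/
def Cf (n : ℕ) (f : (Fin n → Bool) → Bool) :
    Matrix ((Fin n → Bool) × Bool) ((Fin n → Bool) × Bool) ℂ :=
  Matrix.diagonal fun p =>
    Complex.exp (Complex.I * (Real.pi / 4) * (1 - 2 * (if p.2 then 1 else 0)) *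
      (if f p.1 then 1 else 0))

/-- If `f` is non-constant, then `C_f` is not a tensor product `U ⊗ V` of a unitary on
the first `n` qubits and a unitary on the last qubit. -/
theorem Cf_not_tensor_product (n : ℕ) (f : (Fin n → Bool) → Bool)
    (z₁ z₂ : Fin n → Bool) (h₁ : f z₁ = true) (h₂ : f z₂ = false) :
    ∀ (U : Matrix (Fin n → Bool) (Fin n → Bool) ℂ) (V : Matrix Bool Bool ℂ),
      Uᴴ * U = 1 → Vᴴ * V = 1 → Cf n f ≠ U ⊗ₖ V := by
  intro U V hU hV heq
  have e : ∀ p : (Fin n → Bool) × Bool, Cf n f p p = U p.1 p.1 * V p.2 p.2 := by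
    intro p
    rw [heq]
    rcases p with ⟨x, y⟩
    simp [Matrix.kroneckerMap_apply]
  have e1 := e (z₂, false)
  have e2 := e (z₂, true)
  have e3 := e (z₁, false)
  have e4 := e (z₁, true)
  simp [Cf, Matrix.diagonal_apply_eq, h₁, h₂] at e1 e2 e3 e4
  have hu : U z₂ z₂ ≠ 0 := by
    intro h; rw [h, zero_mul] at e1; exact one_ne_zero e1
  have hv : V false false = V true true := by
    have := e1.symm.trans e2
    exact mul_left_cancel₀ hu this
  have key : Complex.exp (Complex.I * (↑Real.pi / 4)) =
      Complex.exp (Complex.I * (↑Real.pi / 4) * (1 - 2)) := by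
    rw [e3, e4, hv]
  have key2 : Complex.exp ((Real.pi/4 : ℝ) * Complex.I) =
      Complex.exp ((-(Real.pi/4) : ℝ) * Complex.I) := by
    convert key using 2 <;> push_cast <;> ring
  have him := congrArg Complex.im key2
  rw [Complex.exp_ofReal_mul_I_im, Complex.exp_ofReal_mul_I_im, Real.sin_neg] at him
  have hs : 0 < Real.sin (Real.pi / 4) :=
    Real.sin_pos_of_pos_of_lt_pi (by positivity) (by linarith [Real.pi_pos])
  linarith
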